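/- Let (Ω, 𝒜, ℙ) be a probability space, let (Z_n)_{n≥1} be a sequence of nonnegative real random variables each having finite moments of all positive integer orders, and let z ≥ 0 be a real number. If for every positive integer p one has E[Z_n^p] → z^p as n → ∞, then for every real p ∈ (0, ∞) one has E[|Z_n − z|^p] → 0 as n → ∞, i.e. Z_n converges to the constant z in L_p for every p ∈ (0, ∞). -/

import Mathlib

open MeasureTheory Filter

/-- If all integer moments of the nonnegative random variables `Z n`
converge to the corresponding powers of `z ≥ 0`, then `Z n → z` in `L_p` for every
real `p ∈ (0, ∞)`. -/
theorem moment_convergence_implies_Lp_convergence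
    {Ω : Type*} [MeasurableSpace Ω] (P : Measure Ω) [IsProbabilityMeasure P]
    (Z : ℕ → Ω → ℝ) (hZmeas : ∀ n, Measurable (Z n))
    (hZnonneg : ∀ n ω, 0 ≤ Z n ω)
    (hZmom : ∀ (n : ℕ) (p : ℕ), 0 < p → Integrable (fun ω => Z n ω ^ p) P)
    (z : ℝ) (hz : 0 ≤ z)
    (hconv : ∀ p : ℕ, 0 < p →
      Tendsto (fun n => ∫ ω, Z n ω ^ p ∂P) atTop (nhds (z ^ p))) :
    ∀ p : ℝ, 0 < p →
      Tendsto (fun n => ∫⁻ ω, ENNReal.ofReal (|Z n ω - z| ^ p) ∂P) atTop (nhds 0) := by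
  -- key conversion: the lintegral of `|Z n - z|^r` is `(eLpNorm (Z n - z) r P)^r`
  have key : ∀ (n : ℕ) (r : ℝ), 0 < r →
      ∫⁻ ω, ENNReal.ofReal (|Z n ω - z| ^ r) ∂P
        = (eLpNorm (fun ω => Z n ω - z) (ENNReal.ofReal r) P) ^ r := by
    intro n r hr
    rw [eLpNorm_eq_lintegral_rpow_enorm_toReal
      (by simp [ENNReal.ofReal_eq_zero, not_le, hr]) ENNReal.ofReal_ne_top,
      ENNReal.toReal_ofReal hr.le]
    rw [← ENNReal.rpow_mul, one_div, inv_mul_cancel₀ hr.ne', ENNReal.rpow_one]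
    congr 1
    ext ω
    rw [Real.enorm_eq_ofReal_abs, ← ENNReal.ofReal_rpow_of_nonneg (abs_nonneg _) hr.le]
  intro p hp
  set m : ℕ := 2 * (⌈p⌉₊ + 1) with hm_def
  have hm0 : 0 < m := by positivity
  have hpm : p ≤ (m : ℝ) := by
    calc p ≤ (⌈p⌉₊ : ℝ) := Nat.le_ceil p
    _ ≤ (m : ℝ) := by
      rw [hm_def]
      exact_mod_cast (by omega : ⌈p⌉₊ ≤ 2 * (⌈p⌉₊ + 1))
  -- integrability of each binomial term
  have hterm : ∀ (n : ℕ) (j : ℕ),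
      Integrable (fun ω => Z n ω ^ j * (-z) ^ (m - j) * (m.choose j : ℝ)) P := by
    intro n j
    rcases Nat.eq_zero_or_pos j with rfl | hj
    · simpa using (integrable_const ((-z) ^ (m - 0) * (m.choose 0 : ℝ)))
    · exact ((hZmom n j hj).mul_const _).mul_const _
  have hbinom : ∀ (n : ℕ) (ω : Ω), (Z n ω - z) ^ m
      = ∑ j ∈ Finset.range (m + 1), Z n ω ^ j * (-z) ^ (m - j) * (m.choose j : ℝ) := by
    intro n ω
    rw [sub_eq_add_neg, add_pow]
  have hint : ∀ n, Integrable (fun ω => (Z n ω - z) ^ m) P := by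
    intro n
    have := integrable_finset_sum (Finset.range (m + 1)) (fun j _ => hterm n j)
    refine this.congr (Filter.Eventually.of_forall fun ω => ?_)
    exact (hbinom n ω).symm
  -- convergence of the m-th moment of `Z n - z` to 0
  have hIconv : Tendsto (fun n => ∫ ω, (Z n ω - z) ^ m ∂P) atTop (nhds 0) := by
    have hsum : ∀ n, ∫ ω, (Z n ω - z) ^ m ∂P
        = ∑ j ∈ Finset.range (m + 1), (∫ ω, Z n ω ^ j ∂P) * (-z) ^ (m - j) * (m.choose j : ℝ) := by
      intro n
      calc ∫ ω, (Z n ω - z) ^ m ∂P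
          = ∫ ω, ∑ j ∈ Finset.range (m + 1),
              Z n ω ^ j * (-z) ^ (m - j) * (m.choose j : ℝ) ∂P := by
            exact integral_congr_ae (Filter.Eventually.of_forall fun ω => hbinom n ω)
        _ = ∑ j ∈ Finset.range (m + 1),
              ∫ ω, Z n ω ^ j * (-z) ^ (m - j) * (m.choose j : ℝ) ∂P :=
            integral_finset_sum _ (fun j _ => hterm n j)
        _ = ∑ j ∈ Finset.range (m + 1), (∫ ω, Z n ω ^ j ∂P) * (-z) ^ (m - j) * (m.choose j : ℝ) := by
            refine Finset.sum_congr rfl fun j _ => ?_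
            rw [integral_mul_const, integral_mul_const]
    have hlim : Tendsto (fun n => ∑ j ∈ Finset.range (m + 1),
        (∫ ω, Z n ω ^ j ∂P) * (-z) ^ (m - j) * (m.choose j : ℝ)) atTop
        (nhds (∑ j ∈ Finset.range (m + 1), z ^ j * (-z) ^ (m - j) * (m.choose j : ℝ))) := by
      refine tendsto_finset_sum _ fun j _ => ?_
      rcases Nat.eq_zero_or_pos j with rfl | hj
      · simp only [pow_zero, integral_const, probReal_univ, ENNReal.toReal_one, one_smul,
          smul_eq_mul, one_mul]
        exact tendsto_const_nhds
      · exact ((hconv j hj).mul_const _).mul_const _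
    have hzero : ∑ j ∈ Finset.range (m + 1), z ^ j * (-z) ^ (m - j) * (m.choose j : ℝ) = 0 := by
      rw [← add_pow, add_neg_cancel, zero_pow hm0.ne']
    rw [hzero] at hlim
    simpa only [← hsum] using hlim
  -- pass to lintegrals
  have hLconv : Tendsto (fun n => ∫⁻ ω, ENNReal.ofReal (|Z n ω - z| ^ (m : ℝ)) ∂P)
      atTop (nhds 0) := by
    have hm_even : Even m := hm_def ▸ even_two_mul _
    have heq : ∀ n, ∫⁻ ω, ENNReal.ofReal (|Z n ω - z| ^ (m : ℝ)) ∂P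
        = ENNReal.ofReal (∫ ω, (Z n ω - z) ^ m ∂P) := by
      intro n
      rw [MeasureTheory.ofReal_integral_eq_lintegral_ofReal (hint n)
        (Filter.Eventually.of_forall fun ω => hm_even.pow_nonneg _)]
      congr 1
      ext ω
      rw [Real.rpow_natCast, ← abs_pow, abs_of_nonneg (hm_even.pow_nonneg _)]
    simp only [heq]
    have := (ENNReal.continuous_ofReal.tendsto 0).comp hIconv
    simpa [Function.comp_def] using this
  -- the eLpNorm with exponent m tends to 0
  set M : ℕ → ENNReal := fun n => eLpNorm (fun ω => Z n ω - z) (ENNReal.ofReal (m : ℝ)) P with hM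
  have hMconv : Tendsto M atTop (nhds 0) := by
    have hm0' : (0 : ℝ) < (m : ℝ) := by exact_mod_cast hm0
    have hMeq : ∀ n, M n = (∫⁻ ω, ENNReal.ofReal (|Z n ω - z| ^ (m : ℝ)) ∂P) ^ (1 / (m : ℝ)) := by
      intro n
      rw [key n (m : ℝ) hm0', ← ENNReal.rpow_mul, mul_one_div, div_self hm0'.ne',
        ENNReal.rpow_one]
    have hcont := (ENNReal.continuous_rpow_const (y := 1 / (m : ℝ))).tendsto 0
    have h0 : (0 : ENNReal) ^ (1 / (m : ℝ)) = 0 :=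
      ENNReal.zero_rpow_of_pos (by positivity)
    rw [h0] at hcont
    exact Tendsto.congr (fun n => (hMeq n).symm) (hcont.comp hLconv)
  -- the eLpNorm with exponent p tends to 0 by monotonicity
  set N : ℕ → ENNReal := fun n => eLpNorm (fun ω => Z n ω - z) (ENNReal.ofReal p) P with hN
  have hNM : ∀ n, N n ≤ M n := fun n =>
    eLpNorm_le_eLpNorm_of_exponent_le (ENNReal.ofReal_le_ofReal hpm)
      ((hZmeas n).sub measurable_const).aestronglyMeasurable
  have hNconv : Tendsto N atTop (nhds 0) :=
    tendsto_of_tendsto_of_tendsto_of_le_of_le tendsto_const_nhds hMconv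
      (fun n => zero_le) hNM
  -- conclude
  have hcont := (ENNReal.continuous_rpow_const (y := p)).tendsto 0
  have h0 : (0 : ENNReal) ^ p = 0 := ENNReal.zero_rpow_of_pos hp
  rw [h0] at hcont
  exact Tendsto.congr (fun n => (key n p hp).symm) (hcont.comp hNconv)
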